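/- Let X be a compact metric space and G the free semigroup generated by continuous maps {f_y}_{y∈Y}. If Z ⊆ X is G-invariant (i.e. f_y^{-1}(Z) = Z for all y ∈ Y), then for all finite words w⁽¹⁾ of length p, w⁽²⁾ of length q, any letter i ∈ Y, and any ε > 0: Λ_{w⁽¹⁾ i w⁽²⁾}(Z, p+q+1, ε) ≤ Λ_{w⁽¹⁾}(Z, p, ε) · Λ_{w⁽²⁾}(Z, q, ε), where Λ_w(Z, n, ε) is the minimal cardinality of a cover of Z by sets of the form X_w(U) = U_0 ∩ f_{i_1}^{-1}(U_1) ∩ ⋯ ∩ f_{i_n ⋯ i_1}^{-1}(U_n), with (U_0,…,U_n) a string of open sets of diameter < ε and w = i_1 ⋯ i_n. -/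

import Mathlib

open Metric

variable {X Y : Type*}

/-- For a word `w = [i₁, …, i_k]`, `fw f w = f_{i₁} ∘ ⋯ ∘ f_{i_k}`. -/
def fw (f : Y → X → X) : List Y → X → X
  | [] => id
  | y :: w => fun x => f y (fw f w x)

/-- Bowen metric of the word `w = i₁ ⋯ i_n`:
`d_w(x,y) = max_{0 ≤ j ≤ n} d(f_{i_j ⋯ i_1} x, f_{i_j ⋯ i_1} y)`, i.e. the maximum of
`d(f_{w'} x, f_{w'} y)` over the words `w' ≤ w̄` (the reverses of initial segments of `w`). -/
noncomputable def dB [PseudoMetricSpace X] (f : Y → X → X) (w : List Y) (x y : X) : ℝ :=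
  ((w.inits.map fun u => dist (fw f u.reverse x) (fw f u.reverse y))).foldr max 0

/-- The `(w,ε)`-Bowen ball at `x`. -/
def BB [PseudoMetricSpace X] (f : Y → X → X) (w : List Y) (x : X) (ε : ℝ) : Set X :=
  {z | dB f w x z < ε}

/-- For a word `w = i₁ ⋯ i_n` and a string `U = (U₀, …, U_n)` of sets,
`X_w(U) = U₀ ∩ f_{i₁}⁻¹(U₁) ∩ ⋯ ∩ f_{i_n ⋯ i₁}⁻¹(U_n)`. -/
def strSet (f : Y → X → X) (w : List Y) (U : List (Set X)) : Set X :=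
  {x | ∀ j : Fin U.length, fw f ((w.take j).reverse) x ∈ U.get j}

/-- `Λ_w(Z, ε)`: minimal cardinality of a cover of `Z` by sets `X_w(U)` where `U` is a string
of `|w| + 1` open sets of diameter `< ε`. -/
noncomputable def Lam [MetricSpace X] (f : Y → X → X) (w : List Y) (Z : Set X) (ε : ℝ) : ℕ :=
  sInf {k : ℕ | ∃ C : Finset (List (Set X)), C.card = k ∧
    (∀ U ∈ C, U.length = w.length + 1 ∧ ∀ V ∈ U, IsOpen V ∧ Metric.diam V < ε) ∧
    Z ⊆ ⋃ U ∈ C, strSet f w U}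

lemma fw_append (f : Y → X → X) (u v : List Y) (x : X) :
    fw f (u ++ v) x = fw f u (fw f v x) := by
  induction u with
  | nil => rfl
  | cons a u ih => simp [fw, ih]

lemma fw_mem (f : Y → X → X) (Z : Set X) (hZinv : ∀ y : Y, f y ⁻¹' Z = Z)
    (u : List Y) {x : X} (hx : x ∈ Z) : fw f u x ∈ Z := by
  induction u with
  | nil => exact hx
  | cons y u ih =>
    show f y (fw f u x) ∈ Z
    rw [← hZinv y] at ih
    exact ih

/-- There exists a minimizing cover realizing `Lam`. -/
lemma lam_exists_min [MetricSpace X] [CompactSpace X] (f : Y → X → X) (w : List Y)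
    (Z : Set X) (ε : ℝ) (hε : 0 < ε) :
    ∃ C : Finset (List (Set X)), C.card = Lam f w Z ε ∧
      (∀ U ∈ C, U.length = w.length + 1 ∧ ∀ V ∈ U, IsOpen V ∧ Metric.diam V < ε) ∧
      Z ⊆ ⋃ U ∈ C, strSet f w U := by
  classical
  suffices hne : {k : ℕ | ∃ C : Finset (List (Set X)), C.card = k ∧
      (∀ U ∈ C, U.length = w.length + 1 ∧ ∀ V ∈ U, IsOpen V ∧ Metric.diam V < ε) ∧
      Z ⊆ ⋃ U ∈ C, strSet f w U}.Nonempty by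
    exact Nat.sInf_mem hne
  obtain ⟨t, -, htf, htc⟩ := finite_cover_balls_of_compact (isCompact_univ (X := X))
    (show (0:ℝ) < ε/3 by linarith)
  set s := htf.toFinset with hs
  set n := w.length + 1 with hn
  set C : Finset (List (Set X)) :=
    Finset.image (fun g : Fin n → {x // x ∈ s} => List.ofFn fun j => ball (g j : X) (ε/3))
      Finset.univ with hC
  refine ⟨C.card, C, rfl, ?_, ?_⟩
  · intro U hU
    rw [hC, Finset.mem_image] at hU
    obtain ⟨g, -, rfl⟩ := hU
    refine ⟨by simp [hn], ?_⟩
    intro V hV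
    rw [List.mem_ofFn] at hV
    obtain ⟨j, rfl⟩ := hV
    exact ⟨isOpen_ball, (diam_ball (by linarith)).trans_lt (by linarith)⟩
  · intro x hx
    have hch : ∀ j : Fin n, ∃ c : {x // x ∈ s},
        fw f ((w.take j).reverse) x ∈ ball (c : X) (ε/3) := by
      intro j
      have := htc (Set.mem_univ (fw f ((w.take j).reverse) x))
      rw [Set.mem_iUnion₂] at this
      obtain ⟨c, hc, hmem⟩ := this
      exact ⟨⟨c, by simpa [hs] using hc⟩, hmem⟩
    choose g hg using hch
    simp only [Set.mem_iUnion]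
    refine ⟨List.ofFn fun j => ball (g j : X) (ε/3), ?_, ?_⟩
    · rw [hC, Finset.mem_image]; exact ⟨g, Finset.mem_univ _, rfl⟩
    · intro j
      rw [List.get_ofFn]
      exact hg _

lemma mem_strSet_append (f : Y → X → X) (w₁ w₂ : List Y) (i : Y) (U V : List (Set X))
    (hU : U.length = w₁.length + 1) (x : X) :
    x ∈ strSet f (w₁ ++ i :: w₂) (U ++ V) ↔
      x ∈ strSet f w₁ U ∧ f i (fw f w₁.reverse x) ∈ strSet f w₂ V := by
  constructor
  · intro h
    refine ⟨fun j => ?_, fun m => ?_⟩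
    · have hjU := j.isLt
      have hj : (j : ℕ) < (U ++ V).length := by simp only [List.length_append]; omega
      have h' : fw f (((w₁ ++ i :: w₂).take (j:ℕ)).reverse) x ∈ (U ++ V)[(j:ℕ)]'hj :=
        h ⟨j, hj⟩
      rw [List.take_append_of_le_length (by omega)] at h'
      simpa [List.get_eq_getElem, List.getElem_append_left j.isLt] using h'
    · have hmV := m.isLt
      have hj : U.length + (m : ℕ) < (U ++ V).length := by
        simp only [List.length_append]; omega
      have h' : fw f (((w₁ ++ i :: w₂).take (U.length + (m:ℕ))).reverse) x ∈
          (U ++ V)[U.length + (m:ℕ)]'hj := h ⟨U.length + (m:ℕ), hj⟩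
      have et : (w₁ ++ i :: w₂).take (U.length + (m:ℕ)) = w₁ ++ i :: w₂.take (m:ℕ) := by
        rw [hU, List.take_append,
          List.take_of_length_le (show w₁.length ≤ w₁.length + 1 + (m:ℕ) by omega),
          show w₁.length + 1 + (m:ℕ) - w₁.length = (m:ℕ) + 1 by omega,
          List.take_succ_cons]
      rw [et] at h'
      simp only [List.getElem_append_right (Nat.le_add_right U.length (m:ℕ)),
        Nat.add_sub_cancel_left] at h'
      simpa [List.reverse_append, fw_append, fw, List.get_eq_getElem] using h'
  · rintro ⟨h1, h2⟩ j
    rcases lt_or_ge (j : ℕ) U.length with hc | hc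
    · have := h1 ⟨j, hc⟩
      rw [List.get_eq_getElem, List.getElem_append_left hc]
      rw [List.take_append_of_le_length (by omega)]
      exact this
    · have hj : (j : ℕ) < U.length + V.length := by simpa using j.isLt
      have := h2 ⟨(j : ℕ) - U.length, by omega⟩
      rw [List.get_eq_getElem, List.getElem_append_right hc]
      rw [List.take_append,
        List.take_of_length_le (show w₁.length ≤ (j:ℕ) by omega),
        show (j:ℕ) - w₁.length = ((j:ℕ) - U.length) + 1 by omega,
        List.take_succ_cons]
      simpa [List.reverse_append, fw_append, fw] using this

theorem Lam_concat_le_mul [MetricSpace X] [CompactSpace X] (f : Y → X → X)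
    (hf : ∀ y, Continuous (f y)) (Z : Set X) (hZinv : ∀ y : Y, f y ⁻¹' Z = Z)
    (w₁ w₂ : List Y) (i : Y) (ε : ℝ) (hε : 0 < ε) :
    Lam f (w₁ ++ i :: w₂) Z ε ≤ Lam f w₁ Z ε * Lam f w₂ Z ε := by
  classical
  obtain ⟨C₁, hC₁card, hC₁good, hC₁cov⟩ := lam_exists_min f w₁ Z ε hε
  obtain ⟨C₂, hC₂card, hC₂good, hC₂cov⟩ := lam_exists_min f w₂ Z ε hε
  have key : Lam f (w₁ ++ i :: w₂) Z ε ≤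
      (Finset.image (fun p : List (Set X) × List (Set X) => p.1 ++ p.2) (C₁ ×ˢ C₂)).card := by
    apply Nat.sInf_le
    refine ⟨_, rfl, ?_, ?_⟩
    · intro W hW
      simp only [Finset.mem_image, Finset.mem_product] at hW
      obtain ⟨⟨U, V⟩, ⟨hU, hV⟩, rfl⟩ := hW
      obtain ⟨hUl, hUo⟩ := hC₁good U hU
      obtain ⟨hVl, hVo⟩ := hC₂good V hV
      constructor
      · simp only [List.length_append, hUl, hVl, List.length_cons]; omega
      · intro A hA
        rcases List.mem_append.1 hA with h | h
        exacts [hUo A h, hVo A h]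
    · intro x hx
      have hxU := hC₁cov hx
      rw [Set.mem_iUnion₂] at hxU
      obtain ⟨U, hU, hxU⟩ := hxU
      have hgx : f i (fw f w₁.reverse x) ∈ Z := by
        have h1 : fw f w₁.reverse x ∈ Z := fw_mem f Z hZinv _ hx
        rw [← hZinv i] at h1
        exact h1
      have hgV := hC₂cov hgx
      rw [Set.mem_iUnion₂] at hgV
      obtain ⟨V, hV, hgV⟩ := hgV
      rw [Set.mem_iUnion₂]
      refine ⟨U ++ V, ?_, ?_⟩
      · rw [Finset.mem_image]
        exact ⟨(U, V), Finset.mem_product.2 ⟨hU, hV⟩, rfl⟩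
      · exact (mem_strSet_append f w₁ w₂ i U V (hC₁good U hU).1 x).2 ⟨hxU, hgV⟩
  calc Lam f (w₁ ++ i :: w₂) Z ε ≤ _ := key
    _ ≤ (C₁ ×ˢ C₂).card := Finset.card_image_le
    _ = C₁.card * C₂.card := Finset.card_product _ _
    _ = Lam f w₁ Z ε * Lam f w₂ Z ε := by rw [hC₁card, hC₂card]
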